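/- (Theorem 4) Under Assumptions 1 and 2, define δ₁ := C₀C₁/m² + C₂/m, δ₂ := C₀²C₁/(2m³) + C₀C₂/m² + C₃/(2m), δ₂' := δ₂ + C₃/(2m), Q := 2m/C₁, and σ := 1 + h·δ₁. Let c > 0 be any constant. If the sampling period satisfies h ≤ min{1, [Q^{2τ−1}·c / ((1+δ₁)·c + δ₂')^{2τ}]^{1/(4τ−2)}}, and the initial error satisfies ‖x₀ − x*(t₀)‖ ≤ c·h², then the ANT iterates satisfy, for all k ≥ 1: ‖x_k − x*(t_k)‖ ≤ Q^{−(2τ−1)}·(σc + δ₂')^{2τ}·h^{4τ}. -/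

import Mathlib

noncomputable section

/-- The setting of a time-varying, smooth, strongly convex optimization problem
`min_{x ∈ ℝⁿ} f(x;t)`, bundling the objective `f`, its derivatives, the Hessian
inverse, the optimal trajectory `x*(t)`, and Assumptions 1 and 2 of the paper. -/
structure TVOpt (n : ℕ) where
  /-- the objective `f(x;t)` -/
  f : EuclideanSpace ℝ (Fin n) → ℝ → ℝ
  /-- the gradient `∇ₓ f(x;t)` -/
  grad : EuclideanSpace ℝ (Fin n) → ℝ → EuclideanSpace ℝ (Fin n)
  /-- the Hessian `∇ₓₓ f(x;t)` -/
  hess : EuclideanSpace ℝ (Fin n) → ℝ →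
    EuclideanSpace ℝ (Fin n) →L[ℝ] EuclideanSpace ℝ (Fin n)
  /-- the Hessian inverse `[∇ₓₓ f(x;t)]⁻¹` -/
  hessInv : EuclideanSpace ℝ (Fin n) → ℝ →
    EuclideanSpace ℝ (Fin n) →L[ℝ] EuclideanSpace ℝ (Fin n)
  /-- the mixed partial derivative `∇_{tx} f(x;t)` -/
  dtgrad : EuclideanSpace ℝ (Fin n) → ℝ → EuclideanSpace ℝ (Fin n)
  /-- the third derivative tensor `∇ₓₓₓ f(x;t)` -/
  d3 : EuclideanSpace ℝ (Fin n) → ℝ →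
    EuclideanSpace ℝ (Fin n) →L[ℝ] EuclideanSpace ℝ (Fin n) →L[ℝ] EuclideanSpace ℝ (Fin n)
  /-- the time derivative of the Hessian `∇_{xtx} f(x;t)` -/
  dthess : EuclideanSpace ℝ (Fin n) → ℝ →
    EuclideanSpace ℝ (Fin n) →L[ℝ] EuclideanSpace ℝ (Fin n)
  /-- the second time derivative of the gradient `∇_{ttx} f(x;t)` -/
  dttgrad : EuclideanSpace ℝ (Fin n) → ℝ → EuclideanSpace ℝ (Fin n)
  /-- the optimal trajectory `x*(t)` -/
  xstar : ℝ → EuclideanSpace ℝ (Fin n)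
  /-- strong convexity constant -/
  m : ℝ
  /-- Hessian norm bound (gradient Lipschitz constant) -/
  L : ℝ
  C0 : ℝ
  C1 : ℝ
  C2 : ℝ
  C3 : ℝ
  m_pos : 0 < m
  grad_spec : ∀ (x : EuclideanSpace ℝ (Fin n)) (t : ℝ), HasGradientAt (fun y => f y t) (grad x t) x
  hess_spec : ∀ (x : EuclideanSpace ℝ (Fin n)) (t : ℝ), HasFDerivAt (fun y => grad y t) (hess x t) x
  dtgrad_spec : ∀ (x : EuclideanSpace ℝ (Fin n)) (t : ℝ), HasDerivAt (fun s => grad x s) (dtgrad x t) t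
  d3_spec : ∀ (x : EuclideanSpace ℝ (Fin n)) (t : ℝ), HasFDerivAt (fun y => hess y t) (d3 x t) x
  dthess_spec : ∀ (x : EuclideanSpace ℝ (Fin n)) (t : ℝ), HasDerivAt (fun s => hess x s) (dthess x t) t
  dttgrad_spec : ∀ (x : EuclideanSpace ℝ (Fin n)) (t : ℝ), HasDerivAt (fun s => dtgrad x s) (dttgrad x t) t
  /-- Assumption 1: `∇ₓₓ f(x;t) ⪰ m·I` uniformly in `x` and `t`. -/
  strong_convex : ∀ (x : EuclideanSpace ℝ (Fin n)) (t : ℝ) (v : EuclideanSpace ℝ (Fin n)),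
    m * ‖v‖ ^ 2 ≤ @inner ℝ _ _ v (hess x t v)
  hessInv_left : ∀ (x : EuclideanSpace ℝ (Fin n)) (t : ℝ), ContinuousLinearMap.comp (hessInv x t) (hess x t) =
    ContinuousLinearMap.id ℝ (EuclideanSpace ℝ (Fin n))
  hessInv_right : ∀ (x : EuclideanSpace ℝ (Fin n)) (t : ℝ), ContinuousLinearMap.comp (hess x t) (hessInv x t) =
    ContinuousLinearMap.id ℝ (EuclideanSpace ℝ (Fin n))
  /-- Assumption 2: bounded derivatives, uniformly in `x` and `t`. -/
  hess_bound : ∀ (x : EuclideanSpace ℝ (Fin n)) (t : ℝ), ‖hess x t‖ ≤ L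
  dtgrad_bound : ∀ (x : EuclideanSpace ℝ (Fin n)) (t : ℝ), ‖dtgrad x t‖ ≤ C0
  d3_bound : ∀ (x : EuclideanSpace ℝ (Fin n)) (t : ℝ), ‖d3 x t‖ ≤ C1
  dthess_bound : ∀ (x : EuclideanSpace ℝ (Fin n)) (t : ℝ), ‖dthess x t‖ ≤ C2
  dttgrad_bound : ∀ (x : EuclideanSpace ℝ (Fin n)) (t : ℝ), ‖dttgrad x t‖ ≤ C3
  /-- `x*(t)` minimizes `f(·;t)` -/
  xstar_min : ∀ t : ℝ, IsMinOn (fun x => f x t) Set.univ (xstar t)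
  /-- equivalently, `∇ₓ f(x*(t);t) = 0` -/
  xstar_grad : ∀ t : ℝ, grad (xstar t) t = 0

section Helpers
variable {F : Type*} [NormedAddCommGroup F] [NormedSpace ℝ F]

/-- Mean value inequality for a function on ℝ. -/
lemma ant_lipR {f f' : ℝ → F} {C : ℝ} (hf : ∀ s, HasDerivAt f (f' s) s)
    (hb : ∀ s, ‖f' s‖ ≤ C) (a b : ℝ) : ‖f b - f a‖ ≤ C * |b - a| := by
  have h := Convex.norm_image_sub_le_of_norm_hasFDerivWithin_le
    (f := f) (f' := fun s => ContinuousLinearMap.smulRight (1 : ℝ →L[ℝ] ℝ) (f' s))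
    (s := Set.univ) (C := C)
    (fun x _ => (hf x).hasFDerivAt.hasFDerivWithinAt)
    (fun x _ => by simpa using hb x) convex_univ (Set.mem_univ a) (Set.mem_univ b)
  simpa [Real.norm_eq_abs, abs_sub_comm] using h

/-- Quadratic remainder bound: if `φ 0 = 0` and `‖φ' θ‖ ≤ K θ` on `[0,1]` then `‖φ 1‖ ≤ K/2`. -/
lemma ant_quad {φ φ' : ℝ → F} {K : ℝ} (hφ : ∀ θ, HasDerivAt φ (φ' θ) θ)
    (h0 : φ 0 = 0) (hb : ∀ θ ∈ Set.Icc (0:ℝ) 1, ‖φ' θ‖ ≤ K * θ) : ‖φ 1‖ ≤ K / 2 := by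
  have hB : ∀ x : ℝ, HasDerivAt (fun θ : ℝ => K * θ ^ 2 / 2) (K * x) x := by
    intro x
    have h := ((hasDerivAt_pow 2 x).const_mul K).div_const 2
    convert h using 1
    · rfl
    · rfl
    · norm_num; ring
  have := image_norm_le_of_norm_deriv_right_le_deriv_boundary (a := 0) (b := 1)
    (f := φ) (f' := φ')
    (fun x _ => (hφ x).continuousAt.continuousWithinAt)
    (fun x _ => (hφ x).hasDerivWithinAt)
    (by simp [h0])
    hB
    (fun x hx => hb x ⟨hx.1, hx.2.le⟩)
  have h1 := this (Set.right_mem_Icc.mpr zero_le_one)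
  simpa using h1

lemma ant_two_mul_le_two_pow : ∀ τ : ℕ, 1 ≤ τ → 2 * τ ≤ 2 ^ τ := by
  intro τ hτ
  induction τ with
  | zero => omega
  | succ n ih =>
    rcases Nat.eq_zero_or_pos n with h | hn
    · subst h; norm_num
    · have := ih hn
      have h2 : 2 ≤ 2 ^ n := by
        calc 2 = 2 ^ 1 := rfl
        _ ≤ 2 ^ n := Nat.pow_le_pow_right (by norm_num) hn
      calc 2 * (n + 1) = 2 * n + 2 := by ring
      _ ≤ 2 ^ n + 2 ^ n := by omega
      _ = 2 ^ (n + 1) := by ring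

end Helpers

section PLemmas
variable {n : ℕ} (P : TVOpt n)

local notation "E" => EuclideanSpace ℝ (Fin n)

lemma ant_C0_nonneg : 0 ≤ P.C0 := le_trans (norm_nonneg _) (P.dtgrad_bound 0 0)
lemma ant_C1_nonneg : 0 ≤ P.C1 := le_trans (norm_nonneg (P.d3 0 0)) (P.d3_bound 0 0)
lemma ant_C2_nonneg : 0 ≤ P.C2 := le_trans (norm_nonneg _) (P.dthess_bound 0 0)
lemma ant_C3_nonneg : 0 ≤ P.C3 := le_trans (norm_nonneg _) (P.dttgrad_bound 0 0)

lemma ant_hess_lb (x : E) (t : ℝ) (w : E) : P.m * ‖w‖ ≤ ‖P.hess x t w‖ := by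
  rcases eq_or_ne w 0 with rfl | hw
  · simp
  · have h1 := P.strong_convex x t w
    have h2 : (inner ℝ w (P.hess x t w) : ℝ) ≤ ‖w‖ * ‖P.hess x t w‖ := real_inner_le_norm _ _
    have hw' : 0 < ‖w‖ := norm_pos_iff.mpr hw
    nlinarith [sq_nonneg ‖w‖]

lemma ant_hess_inv_apply (x : E) (t : ℝ) (v : E) : P.hess x t (P.hessInv x t v) = v := by
  have := congrArg (fun A => A v) (P.hessInv_right x t)
  simpa using this

lemma ant_inv_hess_apply (x : E) (t : ℝ) (v : E) : P.hessInv x t (P.hess x t v) = v := by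
  have := congrArg (fun A => A v) (P.hessInv_left x t)
  simpa using this

lemma ant_hessInv_apply_le (x : E) (t : ℝ) (v : E) : ‖P.hessInv x t v‖ ≤ ‖v‖ / P.m := by
  have h := ant_hess_lb P x t (P.hessInv x t v)
  rw [ant_hess_inv_apply] at h
  rw [le_div_iff₀ P.m_pos, mul_comm]
  exact h

lemma ant_hessInv_norm_le (x : E) (t : ℝ) : ‖P.hessInv x t‖ ≤ 1 / P.m := by
  refine ContinuousLinearMap.opNorm_le_bound _ (by have := P.m_pos; positivity) fun v => ?_
  calc ‖P.hessInv x t v‖ ≤ ‖v‖ / P.m := ant_hessInv_apply_le P x t v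
  _ = 1 / P.m * ‖v‖ := by ring


lemma ant_hess_lip_x (t : ℝ) (a b : E) : ‖P.hess a t - P.hess b t‖ ≤ P.C1 * ‖a - b‖ := by
  have h := Convex.norm_image_sub_le_of_norm_hasFDerivWithin_le
    (f := fun y => P.hess y t) (f' := fun y => P.d3 y t) (s := Set.univ) (C := P.C1)
    (fun y _ => (P.d3_spec y t).hasFDerivWithinAt)
    (fun y _ => P.d3_bound y t) convex_univ (Set.mem_univ b) (Set.mem_univ a)
  exact h

lemma ant_hess_lip_t (x : E) (t s : ℝ) : ‖P.hess x t - P.hess x s‖ ≤ P.C2 * |t - s| :=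
  ant_lipR (fun r => P.dthess_spec x r) (fun r => P.dthess_bound x r) s t

lemma ant_dtgrad_lip_t (x : E) (t s : ℝ) : ‖P.dtgrad x t - P.dtgrad x s‖ ≤ P.C3 * |t - s| :=
  ant_lipR (fun r => P.dttgrad_spec x r) (fun r => P.dttgrad_bound x r) s t

lemma ant_grad_lip_t (x : E) (t s : ℝ) : ‖P.grad x t - P.grad x s‖ ≤ P.C0 * |t - s| :=
  ant_lipR (fun r => P.dtgrad_spec x r) (fun r => P.dtgrad_bound x r) s t

/-- derivative of θ ↦ grad (a + θ • u) t -/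
lemma ant_deriv_line (t : ℝ) (a u : E) (θ : ℝ) :
    HasDerivAt (fun θ : ℝ => P.grad (a + θ • u) t) (P.hess (a + θ • u) t u) θ := by
  have hγ : HasDerivAt (fun θ : ℝ => a + θ • u) u θ := by
    simpa using ((hasDerivAt_id θ).smul_const u).const_add a
  have := (P.hess_spec (a + θ • u) t).comp_hasDerivAt θ hγ
  exact this

/-- Taylor remainder in x. -/
lemma ant_grad_taylor_x (t : ℝ) (a b : E) :
    ‖P.grad b t - P.grad a t - P.hess a t (b - a)‖ ≤ P.C1 / 2 * ‖b - a‖ ^ 2 := by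
  set u := b - a with hu
  have hder : ∀ θ : ℝ, HasDerivAt (fun θ : ℝ => P.grad (a + θ • u) t - P.grad a t - θ • P.hess a t u)
      (P.hess (a + θ • u) t u - P.hess a t u) θ := by
    intro θ
    have h1 := ant_deriv_line P t a u θ
    have h2 : HasDerivAt (fun θ : ℝ => θ • P.hess a t u) (P.hess a t u) θ := by
      simpa using (hasDerivAt_id θ).smul_const (P.hess a t u)
    exact (h1.sub_const (P.grad a t)).sub h2
  have hbnd : ∀ θ ∈ Set.Icc (0:ℝ) 1,
      ‖P.hess (a + θ • u) t u - P.hess a t u‖ ≤ (P.C1 * ‖u‖ ^ 2) * θ := by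
    intro θ hθ
    have h3 : ‖P.hess (a + θ • u) t u - P.hess a t u‖
        ≤ ‖P.hess (a + θ • u) t - P.hess a t‖ * ‖u‖ := by
      have := (P.hess (a + θ • u) t - P.hess a t).le_opNorm u
      rwa [ContinuousLinearMap.sub_apply] at this
    have h4 := ant_hess_lip_x P t (a + θ • u) a
    have h5 : ‖a + θ • u - a‖ = θ * ‖u‖ := by
      simp [norm_smul, abs_of_nonneg hθ.1]
    calc ‖P.hess (a + θ • u) t u - P.hess a t u‖
        ≤ ‖P.hess (a + θ • u) t - P.hess a t‖ * ‖u‖ := h3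
    _ ≤ P.C1 * ‖a + θ • u - a‖ * ‖u‖ := by
        have := mul_le_mul_of_nonneg_right h4 (norm_nonneg u); linarith
    _ = P.C1 * ‖u‖ ^ 2 * θ := by rw [h5]; ring
  have key := ant_quad hder (by simp) hbnd
  have hab : a + (1:ℝ) • u = b := by simp [hu]
  rw [hab, one_smul] at key
  calc ‖P.grad b t - P.grad a t - P.hess a t u‖ ≤ P.C1 * ‖u‖ ^ 2 / 2 := key
  _ = P.C1 / 2 * ‖u‖ ^ 2 := by ring


/-- Taylor remainder in t. -/
lemma ant_grad_taylor_t (x : E) (t s : ℝ) :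
    ‖P.grad x s - P.grad x t - (s - t) • P.dtgrad x t‖ ≤ P.C3 / 2 * (s - t) ^ 2 := by
  have hder : ∀ θ : ℝ, HasDerivAt
      (fun θ : ℝ => P.grad x (t + θ * (s - t)) - P.grad x t - (θ * (s - t)) • P.dtgrad x t)
      ((s - t) • P.dtgrad x (t + θ * (s - t)) - (s - t) • P.dtgrad x t) θ := by
    intro θ
    have hγ : HasDerivAt (fun θ : ℝ => t + θ * (s - t)) (s - t) θ := by
      simpa using ((hasDerivAt_id θ).mul_const (s - t)).const_add t
    have h1 : HasDerivAt (fun θ : ℝ => P.grad x (t + θ * (s - t)))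
        ((s - t) • P.dtgrad x (t + θ * (s - t))) θ :=
      (P.dtgrad_spec x (t + θ * (s - t))).scomp θ hγ
    have h2 : HasDerivAt (fun θ : ℝ => (θ * (s - t)) • P.dtgrad x t)
        ((s - t) • P.dtgrad x t) θ := by
      have := ((hasDerivAt_id θ).mul_const (s - t)).smul_const (P.dtgrad x t)
      simpa using this
    exact (h1.sub_const (P.grad x t)).sub h2
  have hbnd : ∀ θ ∈ Set.Icc (0:ℝ) 1,
      ‖(s - t) • P.dtgrad x (t + θ * (s - t)) - (s - t) • P.dtgrad x t‖
        ≤ (P.C3 * (s - t) ^ 2) * θ := by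
    intro θ hθ
    rw [← smul_sub, norm_smul]
    have h4 := ant_dtgrad_lip_t P x (t + θ * (s - t)) t
    have h5 : |t + θ * (s - t) - t| = θ * |s - t| := by
      rw [add_sub_cancel_left, abs_mul, abs_of_nonneg hθ.1]
    rw [h5] at h4
    calc ‖s - t‖ * ‖P.dtgrad x (t + θ * (s - t)) - P.dtgrad x t‖
        ≤ |s - t| * (P.C3 * (θ * |s - t|)) := by
          rw [Real.norm_eq_abs]
          exact mul_le_mul_of_nonneg_left h4 (abs_nonneg _)
    _ = P.C3 * |s - t| ^ 2 * θ := by ring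
    _ = P.C3 * (s - t) ^ 2 * θ := by rw [sq_abs]
  have key := ant_quad hder (by simp) hbnd
  simp only [one_mul] at key
  calc ‖P.grad x s - P.grad x t - (s - t) • P.dtgrad x t‖
      = ‖P.grad x (t + 1 * (s - t)) - P.grad x t - (1 * (s - t)) • P.dtgrad x t‖ := by
        norm_num
  _ ≤ P.C3 * (s - t) ^ 2 / 2 := by simpa using key
  _ = P.C3 / 2 * (s - t) ^ 2 := by ring

/-- dtgrad is Lipschitz in x with constant C2. -/
lemma ant_dtgrad_lip_x (t : ℝ) (x y : E) :
    ‖P.dtgrad x t - P.dtgrad y t‖ ≤ P.C2 * ‖x - y‖ := by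
  -- the function s ↦ grad x s - grad y s is Lipschitz with constant C2‖x-y‖
  have lip : ∀ s : ℝ, ‖(P.grad x s - P.grad y s) - (P.grad x t - P.grad y t)‖
      ≤ P.C2 * ‖x - y‖ * |s - t| := by
    intro s
    set u := x - y with hu
    have hw : ∀ θ : ℝ, HasDerivAt (fun θ : ℝ => P.grad (y + θ • u) s - P.grad (y + θ • u) t)
        (P.hess (y + θ • u) s u - P.hess (y + θ • u) t u) θ := fun θ =>
      (ant_deriv_line P s y u θ).sub (ant_deriv_line P t y u θ)
    have hb : ∀ θ : ℝ, ‖P.hess (y + θ • u) s u - P.hess (y + θ • u) t u‖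
        ≤ P.C2 * |s - t| * ‖u‖ := by
      intro θ
      have := (P.hess (y + θ • u) s - P.hess (y + θ • u) t).le_opNorm u
      rw [ContinuousLinearMap.sub_apply] at this
      calc ‖P.hess (y + θ • u) s u - P.hess (y + θ • u) t u‖
          ≤ ‖P.hess (y + θ • u) s - P.hess (y + θ • u) t‖ * ‖u‖ := this
      _ ≤ P.C2 * |s - t| * ‖u‖ :=
          mul_le_mul_of_nonneg_right (ant_hess_lip_t P _ s t) (norm_nonneg u)
    have := ant_lipR hw (fun θ => hb θ) 0 1
    simp only [zero_smul, add_zero, one_smul] at this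
    have hyu : y + u = x := by simp [hu]
    rw [hyu] at this
    calc ‖(P.grad x s - P.grad y s) - (P.grad x t - P.grad y t)‖
        = ‖(P.grad x s - P.grad x t) - (P.grad y s - P.grad y t)‖ := by
          congr 1; abel
    _ ≤ P.C2 * |s - t| * ‖u‖ * |1 - 0| := this
    _ = P.C2 * ‖u‖ * |s - t| := by simp; ring
  -- derivative of that function at t is dtgrad x t - dtgrad y t
  have hF : HasDerivAt (fun s => P.grad x s - P.grad y s) (P.dtgrad x t - P.dtgrad y t) t :=
    (P.dtgrad_spec x t).sub (P.dtgrad_spec y t)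
  have hlip : ∀ᶠ s in nhds t, ‖(P.grad x s - P.grad y s) - (P.grad x t - P.grad y t)‖
      ≤ P.C2 * ‖x - y‖ * ‖s - t‖ := by
    filter_upwards with s
    simpa [Real.norm_eq_abs] using lip s
  have hC : (0:ℝ) ≤ P.C2 * ‖x - y‖ := mul_nonneg (ant_C2_nonneg P) (norm_nonneg _)
  have := hF.hasFDerivAt.le_of_lip' hC hlip
  calc ‖P.dtgrad x t - P.dtgrad y t‖
      = ‖ContinuousLinearMap.smulRight (1 : ℝ →L[ℝ] ℝ) (P.dtgrad x t - P.dtgrad y t)‖ := by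
        simp
  _ ≤ P.C2 * ‖x - y‖ := this


/-- Strong monotonicity of the gradient. -/
lemma ant_strong_mono (t : ℝ) (a b : E) :
    P.m * ‖a - b‖ ≤ ‖P.grad a t - P.grad b t‖ := by
  rcases eq_or_ne a b with rfl | hab
  · simp
  set u := a - b with hu
  have hρ : ∀ θ : ℝ, HasDerivAt
      (fun θ : ℝ => (inner ℝ (P.grad (b + θ • u) t) u : ℝ) - θ * (P.m * ‖u‖ ^ 2))
      ((inner ℝ (P.hess (b + θ • u) t u) u : ℝ) - P.m * ‖u‖ ^ 2) θ := by
    intro θ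
    have h1 : HasDerivAt (fun θ : ℝ => (inner ℝ (P.grad (b + θ • u) t) u : ℝ))
        ((inner ℝ (P.hess (b + θ • u) t u) u : ℝ)) θ := by
      have := (ant_deriv_line P t b u θ).inner ℝ (hasDerivAt_const θ u)
      simpa using this
    have h2 : HasDerivAt (fun θ : ℝ => θ * (P.m * ‖u‖ ^ 2)) (P.m * ‖u‖ ^ 2) θ := by
      simpa using (hasDerivAt_id θ).mul_const (P.m * ‖u‖ ^ 2)
    exact h1.sub h2
  have hmono : Monotone (fun θ : ℝ =>
      (inner ℝ (P.grad (b + θ • u) t) u : ℝ) - θ * (P.m * ‖u‖ ^ 2)) := by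
    apply monotone_of_deriv_nonneg
    · exact fun θ => (hρ θ).differentiableAt
    · intro θ
      rw [(hρ θ).deriv]
      have := P.strong_convex (b + θ • u) t u
      have hsym : (inner ℝ (P.hess (b + θ • u) t u) u : ℝ) = inner ℝ u (P.hess (b + θ • u) t u) :=
        real_inner_comm _ _
      linarith [this, hsym ▸ this]
  have h01 := hmono (zero_le_one : (0:ℝ) ≤ 1)
  simp only [zero_smul, add_zero, one_smul, zero_mul, sub_zero, one_mul] at h01
  have hba : b + u = a := by simp [hu]
  rw [hba] at h01
  -- ⟪grad a - grad b, u⟫ ≥ m ‖u‖²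
  have hinner : P.m * ‖u‖ ^ 2 ≤ (inner ℝ (P.grad a t - P.grad b t) u : ℝ) := by
    rw [inner_sub_left]; linarith
  have hcs : (inner ℝ (P.grad a t - P.grad b t) u : ℝ) ≤ ‖P.grad a t - P.grad b t‖ * ‖u‖ :=
    real_inner_le_norm _ _
  have hu0 : 0 < ‖u‖ := by
    rw [hu, norm_pos_iff, sub_ne_zero]; exact hab
  have hfin := le_trans hinner hcs
  rw [pow_two] at hfin
  nlinarith [hu0, hfin]

/-- The optimal trajectory is Lipschitz. -/
lemma ant_xstar_lip (t s : ℝ) :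
    ‖P.xstar s - P.xstar t‖ ≤ P.C0 / P.m * |s - t| := by
  have h1 := ant_strong_mono P t (P.xstar s) (P.xstar t)
  rw [P.xstar_grad t, sub_zero] at h1
  have h2 : P.grad (P.xstar s) t = P.grad (P.xstar s) t - P.grad (P.xstar s) s := by
    rw [P.xstar_grad s, sub_zero]
  rw [h2] at h1
  have h3 := ant_grad_lip_t P (P.xstar s) t s
  have h4 : P.m * ‖P.xstar s - P.xstar t‖ ≤ P.C0 * |s - t| := by
    calc P.m * ‖P.xstar s - P.xstar t‖ ≤ ‖P.grad (P.xstar s) t - P.grad (P.xstar s) s‖ := h1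
    _ ≤ P.C0 * |t - s| := h3
    _ = P.C0 * |s - t| := by rw [abs_sub_comm]
  rw [div_mul_eq_mul_div, le_div_iff₀ P.m_pos, mul_comm _ P.m]
  linarith

/-- Newton step contraction. -/
lemma ant_newton_step (t : ℝ) (y : E) :
    ‖(y - P.hessInv y t (P.grad y t)) - P.xstar t‖
      ≤ P.C1 / (2 * P.m) * ‖y - P.xstar t‖ ^ 2 := by
  set z := P.xstar t with hz
  have hid : (y - P.hessInv y t (P.grad y t)) - z
      = P.hessInv y t (P.hess y t (y - z) - P.grad y t) := by
    rw [map_sub, ant_inv_hess_apply]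
    abel
  rw [hid]
  have h1 : ‖P.hess y t (y - z) - P.grad y t‖ ≤ P.C1 / 2 * ‖y - z‖ ^ 2 := by
    have h2 := ant_grad_taylor_x P t y z
    rw [P.xstar_grad t] at h2
    have h3 : P.hess y t (y - z) - P.grad y t
        = 0 - P.grad y t - P.hess y t (z - y) := by
      rw [map_sub, map_sub]; abel
    rw [h3]
    calc ‖0 - P.grad y t - P.hess y t (z - y)‖ ≤ P.C1 / 2 * ‖z - y‖ ^ 2 := h2
    _ = P.C1 / 2 * ‖y - z‖ ^ 2 := by rw [norm_sub_rev]
  calc ‖P.hessInv y t (P.hess y t (y - z) - P.grad y t)‖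
      ≤ ‖P.hess y t (y - z) - P.grad y t‖ / P.m := ant_hessInv_apply_le P y t _
  _ ≤ (P.C1 / 2 * ‖y - z‖ ^ 2) / P.m := by
      rw [div_eq_mul_inv, div_eq_mul_inv]
      exact mul_le_mul_of_nonneg_right h1 (by have := P.m_pos; positivity)
  _ = P.C1 / (2 * P.m) * ‖y - z‖ ^ 2 := by ring

/-- Lipschitz bound for the inverse Hessian. -/
lemma ant_hessInv_lip_x (t : ℝ) (x y : E) :
    ‖P.hessInv x t - P.hessInv y t‖ ≤ P.C1 / P.m ^ 2 * ‖x - y‖ := by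
  have hid : P.hessInv x t - P.hessInv y t
      = (P.hessInv x t).comp ((P.hess y t - P.hess x t).comp (P.hessInv y t)) := by
    ext v
    simp only [ContinuousLinearMap.sub_apply, ContinuousLinearMap.comp_apply, map_sub]
    rw [ant_hess_inv_apply]
    have h2 : P.hessInv x t (P.hess x t (P.hessInv y t v)) = P.hessInv y t v :=
      ant_inv_hess_apply P x t _
    rw [h2]
  rw [hid]
  have hm : (0:ℝ) < P.m := P.m_pos
  have ha := ant_hessInv_norm_le P x t
  have hb : ‖P.hess y t - P.hess x t‖ ≤ P.C1 * ‖x - y‖ := by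
    have h := ant_hess_lip_x P t y x
    rwa [norm_sub_rev y x] at h
  have hc := ant_hessInv_norm_le P y t
  have hC1 := ant_C1_nonneg P
  have hm' : (0:ℝ) ≤ 1 / P.m := by positivity
  calc ‖(P.hessInv x t).comp ((P.hess y t - P.hess x t).comp (P.hessInv y t))‖
      ≤ ‖P.hessInv x t‖ * ‖(P.hess y t - P.hess x t).comp (P.hessInv y t)‖ :=
        ContinuousLinearMap.opNorm_comp_le _ _
  _ ≤ ‖P.hessInv x t‖ * (‖P.hess y t - P.hess x t‖ * ‖P.hessInv y t‖) :=
      mul_le_mul_of_nonneg_left (ContinuousLinearMap.opNorm_comp_le _ _) (norm_nonneg _)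
  _ ≤ (1 / P.m) * ((P.C1 * ‖x - y‖) * (1 / P.m)) := by
      apply mul_le_mul ha _ (by positivity) hm'
      exact mul_le_mul hb hc (norm_nonneg _) (mul_nonneg hC1 (norm_nonneg _))
  _ = P.C1 / P.m ^ 2 * ‖x - y‖ := by ring


/-- The Newton "drift" map is δ₁-Lipschitz in x. -/
lemma ant_drift_lip (t : ℝ) (x y : E) :
    ‖P.hessInv x t (P.dtgrad x t) - P.hessInv y t (P.dtgrad y t)‖
      ≤ (P.C0 * P.C1 / P.m ^ 2 + P.C2 / P.m) * ‖x - y‖ := by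
  have hm := P.m_pos
  have hid : P.hessInv x t (P.dtgrad x t) - P.hessInv y t (P.dtgrad y t)
      = (P.hessInv x t - P.hessInv y t) (P.dtgrad x t)
        + P.hessInv y t (P.dtgrad x t - P.dtgrad y t) := by
    simp only [ContinuousLinearMap.sub_apply, map_sub]
    abel
  rw [hid]
  have h1 : ‖(P.hessInv x t - P.hessInv y t) (P.dtgrad x t)‖
      ≤ (P.C1 / P.m ^ 2 * ‖x - y‖) * P.C0 := by
    calc ‖(P.hessInv x t - P.hessInv y t) (P.dtgrad x t)‖
        ≤ ‖P.hessInv x t - P.hessInv y t‖ * ‖P.dtgrad x t‖ :=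
          ContinuousLinearMap.le_opNorm _ _
    _ ≤ (P.C1 / P.m ^ 2 * ‖x - y‖) * P.C0 := by
        apply mul_le_mul (ant_hessInv_lip_x P t x y) (P.dtgrad_bound x t) (norm_nonneg _)
        have := ant_C1_nonneg P; positivity
  have h2 : ‖P.hessInv y t (P.dtgrad x t - P.dtgrad y t)‖ ≤ (P.C2 * ‖x - y‖) / P.m := by
    calc ‖P.hessInv y t (P.dtgrad x t - P.dtgrad y t)‖
        ≤ ‖P.dtgrad x t - P.dtgrad y t‖ / P.m := ant_hessInv_apply_le P y t _
    _ ≤ (P.C2 * ‖x - y‖) / P.m := by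
        rw [div_eq_mul_inv, div_eq_mul_inv]
        exact mul_le_mul_of_nonneg_right (ant_dtgrad_lip_x P t x y) (by positivity)
  calc ‖(P.hessInv x t - P.hessInv y t) (P.dtgrad x t)
        + P.hessInv y t (P.dtgrad x t - P.dtgrad y t)‖
      ≤ ‖(P.hessInv x t - P.hessInv y t) (P.dtgrad x t)‖
        + ‖P.hessInv y t (P.dtgrad x t - P.dtgrad y t)‖ := norm_add_le _ _
  _ ≤ (P.C1 / P.m ^ 2 * ‖x - y‖) * P.C0 + (P.C2 * ‖x - y‖) / P.m := add_le_add h1 h2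
  _ = (P.C0 * P.C1 / P.m ^ 2 + P.C2 / P.m) * ‖x - y‖ := by ring

/-- Second-order expansion of the optimal trajectory. -/
lemma ant_xstar_taylor (t hstep : ℝ) :
    ‖P.xstar (t + hstep) - P.xstar t
        + hstep • P.hessInv (P.xstar t) t (P.dtgrad (P.xstar t) t)‖
      ≤ (P.C0 ^ 2 * P.C1 / (2 * P.m ^ 3) + P.C0 * P.C2 / P.m ^ 2 + P.C3 / (2 * P.m))
        * hstep ^ 2 := by
  have hm := P.m_pos
  set a := P.xstar t with ha
  set b := P.xstar (t + hstep) with hb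
  set Δ := b - a with hΔ
  have hΔbd : ‖Δ‖ ≤ P.C0 / P.m * |hstep| := by
    have := ant_xstar_lip P t (t + hstep)
    simpa using this
  -- remainders
  have hR1 : ‖P.grad b (t + hstep) - P.grad a (t + hstep) - P.hess a (t + hstep) Δ‖
      ≤ P.C1 / 2 * ‖Δ‖ ^ 2 := ant_grad_taylor_x P (t + hstep) a b
  have hR2 : ‖P.hess a (t + hstep) Δ - P.hess a t Δ‖ ≤ P.C2 * |hstep| * ‖Δ‖ := by
    have h := (P.hess a (t + hstep) - P.hess a t).le_opNorm Δ
    rw [ContinuousLinearMap.sub_apply] at h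
    calc ‖P.hess a (t + hstep) Δ - P.hess a t Δ‖
        ≤ ‖P.hess a (t + hstep) - P.hess a t‖ * ‖Δ‖ := h
    _ ≤ (P.C2 * |t + hstep - t|) * ‖Δ‖ :=
        mul_le_mul_of_nonneg_right (ant_hess_lip_t P a (t + hstep) t) (norm_nonneg _)
    _ = P.C2 * |hstep| * ‖Δ‖ := by rw [add_sub_cancel_left]
  have hR3 : ‖P.grad a (t + hstep) - P.grad a t - hstep • P.dtgrad a t‖
      ≤ P.C3 / 2 * hstep ^ 2 := by
    have := ant_grad_taylor_t P a t (t + hstep)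
    simpa using this
  -- the key algebraic identity
  have hga : P.grad a t = 0 := P.xstar_grad t
  have hgb : P.grad b (t + hstep) = 0 := by
    rw [hb]; exact P.xstar_grad (t + hstep)
  have hkey : P.hess a t Δ + hstep • P.dtgrad a t
      = -((P.grad b (t + hstep) - P.grad a (t + hstep) - P.hess a (t + hstep) Δ)
          + (P.hess a (t + hstep) Δ - P.hess a t Δ)
          + (P.grad a (t + hstep) - P.grad a t - hstep • P.dtgrad a t)) := by
    rw [hga, hgb]
    abel
  -- apply the inverse Hessian
  have hid : Δ + hstep • P.hessInv a t (P.dtgrad a t)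
      = P.hessInv a t (P.hess a t Δ + hstep • P.dtgrad a t) := by
    rw [map_add, ant_inv_hess_apply, map_smul]
  have hnorm : ‖P.hess a t Δ + hstep • P.dtgrad a t‖
      ≤ P.C1 / 2 * ‖Δ‖ ^ 2 + P.C2 * |hstep| * ‖Δ‖ + P.C3 / 2 * hstep ^ 2 := by
    rw [hkey, norm_neg]
    calc ‖(P.grad b (t + hstep) - P.grad a (t + hstep) - P.hess a (t + hstep) Δ)
          + (P.hess a (t + hstep) Δ - P.hess a t Δ)
          + (P.grad a (t + hstep) - P.grad a t - hstep • P.dtgrad a t)‖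
        ≤ ‖P.grad b (t + hstep) - P.grad a (t + hstep) - P.hess a (t + hstep) Δ‖
          + ‖P.hess a (t + hstep) Δ - P.hess a t Δ‖
          + ‖P.grad a (t + hstep) - P.grad a t - hstep • P.dtgrad a t‖ :=
          norm_add₃_le
    _ ≤ _ := by exact add_le_add (add_le_add hR1 hR2) hR3
  have hC0 := ant_C0_nonneg P
  have hC1 := ant_C1_nonneg P
  have hC2 := ant_C2_nonneg P
  have habs : |hstep| ^ 2 = hstep ^ 2 := sq_abs hstep
  have hΔ2 : ‖Δ‖ ^ 2 ≤ (P.C0 / P.m) ^ 2 * hstep ^ 2 := by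
    have h := pow_le_pow_left₀ (norm_nonneg Δ) hΔbd 2
    calc ‖Δ‖ ^ 2 ≤ (P.C0 / P.m * |hstep|) ^ 2 := h
    _ = (P.C0 / P.m) ^ 2 * hstep ^ 2 := by rw [mul_pow, habs]
  have hΔ1 : |hstep| * ‖Δ‖ ≤ P.C0 / P.m * hstep ^ 2 := by
    calc |hstep| * ‖Δ‖ ≤ |hstep| * (P.C0 / P.m * |hstep|) :=
        mul_le_mul_of_nonneg_left hΔbd (abs_nonneg _)
    _ = P.C0 / P.m * |hstep| ^ 2 := by ring
    _ = P.C0 / P.m * hstep ^ 2 := by rw [habs]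
  calc ‖Δ + hstep • P.hessInv a t (P.dtgrad a t)‖
      = ‖P.hessInv a t (P.hess a t Δ + hstep • P.dtgrad a t)‖ := by rw [hid]
  _ ≤ ‖P.hess a t Δ + hstep • P.dtgrad a t‖ / P.m := ant_hessInv_apply_le P a t _
  _ ≤ (P.C1 / 2 * ((P.C0 / P.m) ^ 2 * hstep ^ 2) + P.C2 * (P.C0 / P.m * hstep ^ 2)
        + P.C3 / 2 * hstep ^ 2) / P.m := by
      rw [div_eq_mul_inv, div_eq_mul_inv]
      apply mul_le_mul_of_nonneg_right _ (by positivity)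
      calc ‖P.hess a t Δ + hstep • P.dtgrad a t‖
          ≤ P.C1 / 2 * ‖Δ‖ ^ 2 + P.C2 * |hstep| * ‖Δ‖ + P.C3 / 2 * hstep ^ 2 := hnorm
      _ ≤ _ := by
          apply add_le_add (add_le_add _ _) le_rfl
          · exact mul_le_mul_of_nonneg_left hΔ2 (by positivity)
          · calc P.C2 * |hstep| * ‖Δ‖ = P.C2 * (|hstep| * ‖Δ‖) := by ring
            _ ≤ P.C2 * (P.C0 / P.m * hstep ^ 2) := mul_le_mul_of_nonneg_left hΔ1 hC2
  _ = (P.C0 ^ 2 * P.C1 / (2 * P.m ^ 3) + P.C0 * P.C2 / P.m ^ 2 + P.C3 / (2 * P.m))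
        * hstep ^ 2 := by field_simp


/-- One-step prediction error bound. -/
lemma ant_pred (hstep : ℝ) (hpos : 0 < hstep) (t : ℝ) (xk : E) :
    ‖(xk - hstep • P.hessInv xk t (hstep⁻¹ • (P.grad xk t - P.grad xk (t - hstep))))
        - P.xstar (t + hstep)‖
      ≤ (1 + hstep * (P.C0 * P.C1 / P.m ^ 2 + P.C2 / P.m)) * ‖xk - P.xstar t‖
        + ((P.C0 ^ 2 * P.C1 / (2 * P.m ^ 3) + P.C0 * P.C2 / P.m ^ 2 + P.C3 / (2 * P.m))
            + P.C3 / (2 * P.m)) * hstep ^ 2 := by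
  have hm := P.m_pos
  set dtil : E := hstep⁻¹ • (P.grad xk t - P.grad xk (t - hstep)) with hdtil
  set a := P.xstar t with ha
  -- approximate time derivative error
  have hdt : ‖P.dtgrad xk t - dtil‖ ≤ P.C3 / 2 * hstep := by
    have htay := ant_grad_taylor_t P xk t (t - hstep)
    have hdiff : P.dtgrad xk t - dtil
        = hstep⁻¹ • (P.grad xk (t - hstep) - P.grad xk t - (t - hstep - t) • P.dtgrad xk t) := by
      rw [hdtil]
      have hne : hstep ≠ 0 := ne_of_gt hpos
      match_scalars <;> field_simp <;> ring
    rw [hdiff, norm_smul, Real.norm_eq_abs, abs_inv, abs_of_pos hpos]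
    have h3 : (t - hstep - t) ^ 2 = hstep ^ 2 := by ring
    rw [h3] at htay
    calc hstep⁻¹ * ‖P.grad xk (t - hstep) - P.grad xk t - (t - hstep - t) • P.dtgrad xk t‖
        ≤ hstep⁻¹ * (P.C3 / 2 * hstep ^ 2) :=
          mul_le_mul_of_nonneg_left htay (by positivity)
    _ = P.C3 / 2 * hstep := by field_simp
  -- decomposition
  have hid : (xk - hstep • P.hessInv xk t dtil) - P.xstar (t + hstep)
      = (xk - a)
        - hstep • (P.hessInv xk t (P.dtgrad xk t) - P.hessInv a t (P.dtgrad a t))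
        + hstep • P.hessInv xk t (P.dtgrad xk t - dtil)
        - (P.xstar (t + hstep) - a + hstep • P.hessInv a t (P.dtgrad a t)) := by
    rw [map_sub, smul_sub, smul_sub]
    abel
  rw [hid]
  have hB : ‖hstep • (P.hessInv xk t (P.dtgrad xk t) - P.hessInv a t (P.dtgrad a t))‖
      ≤ hstep * ((P.C0 * P.C1 / P.m ^ 2 + P.C2 / P.m) * ‖xk - a‖) := by
    rw [norm_smul, Real.norm_eq_abs, abs_of_pos hpos]
    exact mul_le_mul_of_nonneg_left (ant_drift_lip P t xk a) hpos.le
  have hC : ‖hstep • P.hessInv xk t (P.dtgrad xk t - dtil)‖ ≤ P.C3 / (2 * P.m) * hstep ^ 2 := by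
    rw [norm_smul, Real.norm_eq_abs, abs_of_pos hpos]
    calc hstep * ‖P.hessInv xk t (P.dtgrad xk t - dtil)‖
        ≤ hstep * (‖P.dtgrad xk t - dtil‖ / P.m) :=
          mul_le_mul_of_nonneg_left (ant_hessInv_apply_le P xk t _) hpos.le
    _ ≤ hstep * ((P.C3 / 2 * hstep) / P.m) := by
        apply mul_le_mul_of_nonneg_left _ hpos.le
        rw [div_eq_mul_inv, div_eq_mul_inv]
        exact mul_le_mul_of_nonneg_right hdt (by positivity)
    _ = P.C3 / (2 * P.m) * hstep ^ 2 := by field_simp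
  have hD : ‖P.xstar (t + hstep) - a + hstep • P.hessInv a t (P.dtgrad a t)‖
      ≤ (P.C0 ^ 2 * P.C1 / (2 * P.m ^ 3) + P.C0 * P.C2 / P.m ^ 2 + P.C3 / (2 * P.m))
        * hstep ^ 2 := ant_xstar_taylor P t hstep
  calc ‖(xk - a)
        - hstep • (P.hessInv xk t (P.dtgrad xk t) - P.hessInv a t (P.dtgrad a t))
        + hstep • P.hessInv xk t (P.dtgrad xk t - dtil)
        - (P.xstar (t + hstep) - a + hstep • P.hessInv a t (P.dtgrad a t))‖
      ≤ ‖(xk - a)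
        - hstep • (P.hessInv xk t (P.dtgrad xk t) - P.hessInv a t (P.dtgrad a t))
        + hstep • P.hessInv xk t (P.dtgrad xk t - dtil)‖
        + ‖P.xstar (t + hstep) - a + hstep • P.hessInv a t (P.dtgrad a t)‖ := norm_sub_le _ _
  _ ≤ (‖xk - a‖
        + ‖hstep • (P.hessInv xk t (P.dtgrad xk t) - P.hessInv a t (P.dtgrad a t))‖
        + ‖hstep • P.hessInv xk t (P.dtgrad xk t - dtil)‖)
        + ‖P.xstar (t + hstep) - a + hstep • P.hessInv a t (P.dtgrad a t)‖ := by
      apply add_le_add_left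
      calc ‖(xk - a)
            - hstep • (P.hessInv xk t (P.dtgrad xk t) - P.hessInv a t (P.dtgrad a t))
            + hstep • P.hessInv xk t (P.dtgrad xk t - dtil)‖
          ≤ ‖(xk - a)
            - hstep • (P.hessInv xk t (P.dtgrad xk t) - P.hessInv a t (P.dtgrad a t))‖
            + ‖hstep • P.hessInv xk t (P.dtgrad xk t - dtil)‖ := norm_add_le _ _
      _ ≤ _ := by
          apply add_le_add_left
          exact norm_sub_le _ _
  _ ≤ (‖xk - a‖ + hstep * ((P.C0 * P.C1 / P.m ^ 2 + P.C2 / P.m) * ‖xk - a‖)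
        + P.C3 / (2 * P.m) * hstep ^ 2)
        + (P.C0 ^ 2 * P.C1 / (2 * P.m ^ 3) + P.C0 * P.C2 / P.m ^ 2 + P.C3 / (2 * P.m))
          * hstep ^ 2 := by
      exact add_le_add (add_le_add (add_le_add le_rfl hB) hC) hD
  _ = (1 + hstep * (P.C0 * P.C1 / P.m ^ 2 + P.C2 / P.m)) * ‖xk - a‖
        + ((P.C0 ^ 2 * P.C1 / (2 * P.m ^ 3) + P.C0 * P.C2 / P.m ^ 2 + P.C3 / (2 * P.m))
            + P.C3 / (2 * P.m)) * hstep ^ 2 := by ring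

/-- Newton iterate bound. -/
lemma ant_newton_iter (hC1 : 0 < P.C1) (t : ℝ) (y : E) (τ : ℕ) :
    ‖(fun z => z - P.hessInv z t (P.grad z t))^[τ] y - P.xstar t‖
      ≤ (2 * P.m / P.C1) * ((P.C1 / (2 * P.m)) * ‖y - P.xstar t‖) ^ (2 ^ τ) := by
  have hm := P.m_pos
  induction τ with
  | zero =>
    simp only [Function.iterate_zero, id_eq, pow_zero, pow_one]
    rw [← mul_assoc]
    have : 2 * P.m / P.C1 * (P.C1 / (2 * P.m)) = 1 := by field_simp
    rw [this, one_mul]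
  | succ k ih =>
    rw [Function.iterate_succ_apply']
    set z := (fun z => z - P.hessInv z t (P.grad z t))^[k] y with hzdef
    calc ‖(z - P.hessInv z t (P.grad z t)) - P.xstar t‖
        ≤ P.C1 / (2 * P.m) * ‖z - P.xstar t‖ ^ 2 := ant_newton_step P t z
    _ ≤ P.C1 / (2 * P.m)
          * ((2 * P.m / P.C1) * ((P.C1 / (2 * P.m)) * ‖y - P.xstar t‖) ^ (2 ^ k)) ^ 2 := by
        apply mul_le_mul_of_nonneg_left _ (by positivity)
        exact pow_le_pow_left₀ (norm_nonneg _) ih 2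
    _ = (2 * P.m / P.C1) * ((P.C1 / (2 * P.m)) * ‖y - P.xstar t‖) ^ (2 ^ (k + 1)) := by
        rw [mul_pow, ← pow_mul, pow_succ]
        field_simp
        ring

end PLemmas

set_option maxHeartbeats 2000000 in
/-- **Theorem 4.** -/
theorem ant_convergence (n : ℕ) (P : TVOpt n) (h : ℝ) (hh : 0 < h)
    (τ : ℕ) (hτ : 1 ≤ τ) (hC1 : 0 < P.C1) (c : ℝ) (hc : 0 < c)
    (δ1 δ2 δ2' Q σ : ℝ)
    (hδ1 : δ1 = P.C0 * P.C1 / P.m ^ 2 + P.C2 / P.m)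
    (hδ2 : δ2 = P.C0 ^ 2 * P.C1 / (2 * P.m ^ 3) + P.C0 * P.C2 / P.m ^ 2 + P.C3 / (2 * P.m))
    (hδ2' : δ2' = δ2 + P.C3 / (2 * P.m))
    (hQ : Q = 2 * P.m / P.C1)
    (hσ : σ = 1 + h * δ1)
    (x : ℕ → EuclideanSpace ℝ (Fin n))
    (hrec : ∀ k : ℕ, x (k + 1) =
      (fun y => y - P.hessInv y (((k : ℝ) + 1) * h) (P.grad y (((k : ℝ) + 1) * h)))^[τ]
        (x k - h • P.hessInv (x k) ((k : ℝ) * h)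
          (h⁻¹ • (P.grad (x k) ((k : ℝ) * h) - P.grad (x k) ((k : ℝ) * h - h)))))
    (hsmall : h ≤ min 1 ((Q ^ (2 * τ - 1) * c / ((1 + δ1) * c + δ2') ^ (2 * τ)) ^
      ((1 : ℝ) / (4 * (τ : ℝ) - 2))))
    (hinit : ‖x 0 - P.xstar 0‖ ≤ c * h ^ 2) :
    ∀ k : ℕ, 1 ≤ k →
      ‖x k - P.xstar ((k : ℝ) * h)‖ ≤
        (Q ^ (2 * τ - 1))⁻¹ * (σ * c + δ2') ^ (2 * τ) * h ^ (4 * τ) := by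
  have hm := P.m_pos
  have hC0 := ant_C0_nonneg P
  have hC2 := ant_C2_nonneg P
  have hC3 := ant_C3_nonneg P
  have hδ1nn : 0 ≤ δ1 := by rw [hδ1]; positivity
  have hδ2nn : 0 ≤ δ2 := by rw [hδ2]; positivity
  have hδ2'nn : 0 ≤ δ2' := by rw [hδ2']; positivity
  have hQpos : 0 < Q := by rw [hQ]; positivity
  have hσpos : 0 < σ := by rw [hσ]; positivity
  have hh1 : h ≤ 1 := le_trans hsmall (min_le_left _ _)
  -- abbreviations
  set P' : ℝ := (1 + δ1) * c + δ2' with hP'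
  have hP'pos : 0 < P' := by
    have : 0 < (1 + δ1) * c := by positivity
    rw [hP']; linarith
  have hcP' : c ≤ P' := by
    rw [hP']; nlinarith
  have hσc : σ * c + δ2' ≤ P' := by
    rw [hσ, hP']
    have : h * δ1 ≤ δ1 := by nlinarith
    nlinarith
  have hσcpos : 0 < σ * c + δ2' := by positivity
  -- consequence of the step-size condition
  have hτ1 : (1:ℕ) ≤ 2 * τ - 1 := by omega
  have hkey : P' ^ (2 * τ) * h ^ (4 * τ - 2) ≤ Q ^ (2 * τ - 1) * c := by
    set X : ℝ := Q ^ (2 * τ - 1) * c / P' ^ (2 * τ) with hX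
    have hXpos : 0 < X := by rw [hX]; positivity
    have h2 : h ≤ X ^ ((1:ℝ) / (4 * (τ:ℝ) - 2)) := le_trans hsmall (min_le_right _ _)
    have hcast : (4 * (τ:ℝ) - 2) = ((4 * τ - 2 : ℕ) : ℝ) := by
      have : (2:ℕ) ≤ 4 * τ := by omega
      push_cast [Nat.cast_sub this]
      ring
    have h3 : h ^ (4 * τ - 2) ≤ (X ^ ((1:ℝ) / (4 * (τ:ℝ) - 2))) ^ (4 * τ - 2) :=
      pow_le_pow_left₀ hh.le h2 _
    have h4 : (X ^ ((1:ℝ) / (4 * (τ:ℝ) - 2))) ^ (4 * τ - 2) = X := by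
      rw [← Real.rpow_natCast (X ^ ((1:ℝ) / (4 * (τ:ℝ) - 2))) (4 * τ - 2),
        ← Real.rpow_mul hXpos.le, ← hcast]
      have hne : (4 * (τ:ℝ) - 2) ≠ 0 := by
        have : (1:ℝ) ≤ (τ:ℝ) := by exact_mod_cast hτ
        nlinarith
      rw [one_div, inv_mul_cancel₀ hne, Real.rpow_one]
    rw [h4] at h3
    calc P' ^ (2 * τ) * h ^ (4 * τ - 2) ≤ P' ^ (2 * τ) * X :=
        mul_le_mul_of_nonneg_left h3 (by positivity)
    _ = Q ^ (2 * τ - 1) * c := by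
        rw [hX, mul_comm]
        exact div_mul_cancel₀ _ (by positivity)
  -- P' h² ≤ Q
  have hPhQ : P' * h ^ 2 ≤ Q := by
    have h5 : (P' * h ^ 2) ^ (2 * τ - 1) ≤ Q ^ (2 * τ - 1) := by
      have e1 : (P' * h ^ 2) ^ (2 * τ - 1) * c ≤ P' ^ (2 * τ) * h ^ (4 * τ - 2) := by
        have e2 : (P' * h ^ 2) ^ (2 * τ - 1) = P' ^ (2 * τ - 1) * h ^ (4 * τ - 2) := by
          rw [mul_pow, ← pow_mul h 2 (2 * τ - 1)]
          have e2' : 2 * (2 * τ - 1) = 4 * τ - 2 := by omega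
          rw [e2']
        rw [e2]
        have e3 : P' ^ (2 * τ) = P' ^ (2 * τ - 1) * P' := by
          rw [← pow_succ P' (2 * τ - 1)]
          have e3' : 2 * τ - 1 + 1 = 2 * τ := by omega
          rw [e3']
        rw [e3]
        calc P' ^ (2 * τ - 1) * h ^ (4 * τ - 2) * c
            ≤ P' ^ (2 * τ - 1) * h ^ (4 * τ - 2) * P' :=
              mul_le_mul_of_nonneg_left hcP' (by positivity)
        _ = P' ^ (2 * τ - 1) * P' * h ^ (4 * τ - 2) := by ring
      have e4 := le_trans e1 hkey
      exact le_of_mul_le_mul_right e4 hc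
    exact le_of_pow_le_pow_left₀ (by omega) hQpos.le h5
  -- the Newton contraction constant
  have hq : P.C1 / (2 * P.m) = Q⁻¹ := by rw [hQ, inv_div]
  have hQpow : Q ^ (2 * τ) = Q ^ (2 * τ - 1) * Q := by
    have e : 2 * τ - 1 + 1 = 2 * τ := by omega
    have hp := pow_succ Q (2 * τ - 1)
    rw [e] at hp
    exact hp
  have hPσ : 0 < σ * c + δ2' := hσcpos
  have h4τ : h ^ (4 * τ) = h ^ (4 * τ - 2) * h ^ 2 := by
    rw [← pow_add]
    have e : 4 * τ - 2 + 2 = 4 * τ := by omega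
    rw [e]
  -- the target quantity
  set T : ℝ := (Q ^ (2 * τ - 1))⁻¹ * (σ * c + δ2') ^ (2 * τ) * h ^ (4 * τ) with hT
  have hTch2 : T ≤ c * h ^ 2 := by
    have h1 : (σ * c + δ2') ^ (2 * τ) ≤ P' ^ (2 * τ) :=
      pow_le_pow_left₀ hPσ.le hσc _
    have h2 : (σ * c + δ2') ^ (2 * τ) * h ^ (4 * τ) ≤ Q ^ (2 * τ - 1) * c * h ^ 2 := by
      calc (σ * c + δ2') ^ (2 * τ) * h ^ (4 * τ)
          ≤ P' ^ (2 * τ) * h ^ (4 * τ) := mul_le_mul_of_nonneg_right h1 (by positivity)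
      _ = P' ^ (2 * τ) * h ^ (4 * τ - 2) * h ^ 2 := by rw [h4τ]; ring
      _ ≤ Q ^ (2 * τ - 1) * c * h ^ 2 := mul_le_mul_of_nonneg_right hkey (by positivity)
    rw [hT, mul_assoc, inv_mul_le_iff₀ (by positivity : (0:ℝ) < Q ^ (2 * τ - 1))]
    calc (σ * c + δ2') ^ (2 * τ) * h ^ (4 * τ) ≤ Q ^ (2 * τ - 1) * c * h ^ 2 := h2
    _ = Q ^ (2 * τ - 1) * (c * h ^ 2) := by ring
  -- main induction
  have main : ∀ k : ℕ, ‖x k - P.xstar ((k : ℝ) * h)‖ ≤ c * h ^ 2 ∧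
      (1 ≤ k → ‖x k - P.xstar ((k : ℝ) * h)‖ ≤ T) := by
    intro k
    induction k with
    | zero =>
      refine ⟨by simpa using hinit, ?_⟩
      intro hk; omega
    | succ k ih =>
      obtain ⟨ihc, -⟩ := ih
      have hcast : ((k + 1 : ℕ) : ℝ) = (k : ℝ) + 1 := by push_cast; ring
      rw [hcast]
      -- prediction bound
      have hpred := ant_pred P h hh ((k : ℝ) * h) (x k)
      rw [← hδ1, ← hδ2, ← hδ2'] at hpred
      have htk1 : (k : ℝ) * h + h = ((k : ℝ) + 1) * h := by ring
      rw [htk1] at hpred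
      have hp : ‖(x k - h • P.hessInv (x k) ((k : ℝ) * h)
            (h⁻¹ • (P.grad (x k) ((k : ℝ) * h) - P.grad (x k) ((k : ℝ) * h - h))))
            - P.xstar (((k : ℝ) + 1) * h)‖ ≤ (σ * c + δ2') * h ^ 2 := by
        calc ‖(x k - h • P.hessInv (x k) ((k : ℝ) * h)
            (h⁻¹ • (P.grad (x k) ((k : ℝ) * h) - P.grad (x k) ((k : ℝ) * h - h))))
            - P.xstar (((k : ℝ) + 1) * h)‖
            ≤ (1 + h * δ1) * ‖x k - P.xstar ((k : ℝ) * h)‖ + δ2' * h ^ 2 := hpred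
        _ ≤ (1 + h * δ1) * (c * h ^ 2) + δ2' * h ^ 2 := by
            apply add_le_add_left
            apply mul_le_mul_of_nonneg_left ihc (by positivity)
        _ = (σ * c + δ2') * h ^ 2 := by rw [hσ]; ring
      -- Newton correction
      have hnewt := ant_newton_iter P hC1 (((k : ℝ) + 1) * h)
        (x k - h • P.hessInv (x k) ((k : ℝ) * h)
          (h⁻¹ • (P.grad (x k) ((k : ℝ) * h) - P.grad (x k) ((k : ℝ) * h - h)))) τ
      rw [← hQ, hq, ← hrec k] at hnewt
      -- base of the power is ≤ 1
      have hbase : Q⁻¹ * ((σ * c + δ2') * h ^ 2) ≤ 1 := by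
        rw [inv_mul_le_iff₀ hQpos, mul_one]
        calc (σ * c + δ2') * h ^ 2 ≤ P' * h ^ 2 :=
            mul_le_mul_of_nonneg_right hσc (by positivity)
        _ ≤ Q := hPhQ
      have hbasenn : 0 ≤ Q⁻¹ * ((σ * c + δ2') * h ^ 2) := by positivity
      have hfin : ‖x (k + 1) - P.xstar (((k : ℝ) + 1) * h)‖ ≤ T := by
        calc ‖x (k + 1) - P.xstar (((k : ℝ) + 1) * h)‖
            ≤ Q * (Q⁻¹ * ‖(x k - h • P.hessInv (x k) ((k : ℝ) * h)
                (h⁻¹ • (P.grad (x k) ((k : ℝ) * h) - P.grad (x k) ((k : ℝ) * h - h))))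
                - P.xstar (((k : ℝ) + 1) * h)‖) ^ (2 ^ τ) := hnewt
        _ ≤ Q * (Q⁻¹ * ((σ * c + δ2') * h ^ 2)) ^ (2 ^ τ) := by
            apply mul_le_mul_of_nonneg_left _ hQpos.le
            apply pow_le_pow_left₀ (by positivity) _ _
            exact mul_le_mul_of_nonneg_left hp (by positivity)
        _ ≤ Q * (Q⁻¹ * ((σ * c + δ2') * h ^ 2)) ^ (2 * τ) := by
            apply mul_le_mul_of_nonneg_left _ hQpos.le
            exact pow_le_pow_of_le_one hbasenn hbase (ant_two_mul_le_two_pow τ hτ)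
        _ = T := by
            rw [hT, mul_pow, mul_pow]
            have hQne : Q ≠ 0 := ne_of_gt hQpos
            have : Q * (Q⁻¹) ^ (2 * τ) = (Q ^ (2 * τ - 1))⁻¹ := by
              rw [inv_pow, hQpow, mul_inv]
              calc Q * ((Q ^ (2 * τ - 1))⁻¹ * Q⁻¹)
                  = (Q ^ (2 * τ - 1))⁻¹ * (Q * Q⁻¹) := by ring
              _ = (Q ^ (2 * τ - 1))⁻¹ := by rw [mul_inv_cancel₀ hQne, mul_one]
            calc Q * ((Q⁻¹) ^ (2 * τ) * ((σ * c + δ2') ^ (2 * τ) * (h ^ 2) ^ (2 * τ)))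
                = (Q * (Q⁻¹) ^ (2 * τ)) * ((σ * c + δ2') ^ (2 * τ) * h ^ (2 * (2 * τ))) := by
                  rw [← pow_mul]; ring
            _ = (Q ^ (2 * τ - 1))⁻¹ * (σ * c + δ2') ^ (2 * τ) * h ^ (4 * τ) := by
                  rw [this]
                  have e : 2 * (2 * τ) = 4 * τ := by omega
                  rw [e, mul_assoc]
      exact ⟨le_trans hfin hTch2, fun _ => hfin⟩
  intro k hk
  exact (main k).2 hk
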